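/- Let T be a Wang tile set with a set of markers M ⊂ T in direction e_i (i ∈ {1,2}). Then there exists a Wang tile set S and a 2-dimensional morphism ω : Ω_S → Ω_T, mapping each tile of S either to a tile of T∖M or to a domino (T∖M) ⊙^i M, such that ω is recognizable in Ω_S and surjective up to a shift: ω(Ω_S) ∪ σ^{e_i} ω(Ω_S) = Ω_T. -/

import Mathlib

/-- A shape of a `d`-dimensional word: a vector of side lengths. -/
abbrev Shape (d : ℕ) := Fin d → ℕ

/-- A finite `d`-dimensional word over alphabet `A`: a shape together with a
function from the corresponding box to `A`. -/
def FWord (A : Type*) (d : ℕ) := Σ n : Shape d, ((∀ j, Fin (n j)) → A)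

/-- The `d`-dimensional word of shape `(1,…,1)` corresponding to a letter. -/
def letter {A : Type*} (d : ℕ) (a : A) : FWord A d := ⟨fun _ => 1, fun _ => a⟩

/-- The concatenation `u ⊙^i v` is well-defined iff the shapes agree in all
coordinates except possibly coordinate `i`. -/
def CatOK {A : Type*} {d : ℕ} (i : Fin d) (u v : FWord A d) : Prop :=
  ∀ j, j ≠ i → u.1 j = v.1 j

/-- Shape of the concatenation in direction `e i`. -/
def catShape {d : ℕ} (i : Fin d) (n m : Shape d) : Shape d :=
  fun j => if j = i then n j + m j else n j

/-- Concatenation `u ⊙^i v` of two `d`-dimensional words in direction `e i`,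
defined when the shapes are compatible. -/
def cat {A : Type*} {d : ℕ} (i : Fin d) (u v : FWord A d) (h : CatOK i u v) :
    FWord A d :=
  ⟨catShape i u.1 v.1, fun a =>
    if hlt : (a i).1 < u.1 i then
      u.2 (fun j => ⟨(a j).1, by
        have h2 := (a j).2
        by_cases hj : j = i
        · subst hj; exact hlt
        · simp only [catShape, if_neg hj] at h2
          exact h2⟩)
    else
      v.2 (fun j => ⟨if j = i then (a j).1 - u.1 i else (a j).1, by
        have h2 := (a j).2
        simp only [catShape] at h2
        split
        · rename_i hj
          simp only [if_pos hj] at h2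
          subst hj
          omega
        · rename_i hj
          have h3 := h j hj
          simp only [if_neg hj] at h2
          omega⟩)⟩

/-- A `d`-dimensional morphism defined on all finite `d`-dimensional words:
whenever `u ⊙^i v` is well-defined, so is `ω u ⊙^i ω v`, and `ω` sends the
former concatenation to the latter. -/
def IsMorphism {A B : Type*} {d : ℕ} (ω : FWord A d → FWord B d) : Prop :=
  ∀ (i : Fin d) (u v : FWord A d) (h : CatOK i u v),
    ∃ h2 : CatOK i (ω u) (ω v), ω (cat i u v h) = cat i (ω u) (ω v) h2


/-- A configuration: a map `ℤ^d → A`. -/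
abbrev Config (A : Type*) (d : ℕ) := (Fin d → ℤ) → A

/-- The shift action: `(σ^k x)_m = x_{m+k}`. -/
def shift {A : Type*} {d : ℕ} (k : Fin d → ℤ) (x : Config A d) : Config A d :=
  fun m => x (m + k)

/-- A set of configurations is shift-invariant. -/
def ShiftInvariant {A : Type*} {d : ℕ} (X : Set (Config A d)) : Prop :=
  ∀ (k : Fin d → ℤ) (x : Config A d), x ∈ X → shift k x ∈ X

/-- A finite word occurs in a configuration (at some position). -/
def Occurs {A : Type*} {d : ℕ} (u : FWord A d) (x : Config A d) : Prop :=
  ∃ p : Fin d → ℤ, ∀ a : ∀ j, Fin (u.1 j),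
    x (fun j => p j + ((a j).1 : ℤ)) = u.2 a

/-- The language of a set of configurations: all finite subwords of its
members. -/
def SubLang {A : Type*} {d : ℕ} (X : Set (Config A d)) : Set (FWord A d) :=
  {u | ∃ x ∈ X, Occurs u x}

/-- The `j`-th canonical basis vector of `ℤ^d`. -/
def unitv {d : ℕ} (j : Fin d) : Fin d → ℤ := fun j' => if j' = j then 1 else 0

/-- `(k, x)` is an `ω`-representation of `y`, i.e. `y = σ^k ω(x)`:
there is a consistent placement function `p` assigning to each `n ∈ ℤ^d` the
position in `y` of the block `ω(x_n)`, with block origins advancing by the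
shapes of the blocks and `p 0 = -k`. -/
def OmegaRep {A B : Type*} {d : ℕ} (ω₀ : A → FWord B d) (y : Config B d)
    (k : Fin d → ℤ) (x : Config A d) : Prop :=
  ∃ p : (Fin d → ℤ) → (Fin d → ℤ),
    p 0 = -k ∧
    (∀ (n : Fin d → ℤ) (j : Fin d),
      p (n + unitv j) = p n + (((ω₀ (x n)).1 j : ℤ) • unitv j)) ∧
    (∀ (n : Fin d → ℤ) (a : ∀ j, Fin ((ω₀ (x n)).1 j)),
      y (fun j => p n j + ((a j).1 : ℤ)) = (ω₀ (x n)).2 a)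

/-- The `ω`-representation `(k, x)` is centered if `0 ≤ k < shape (ω (x 0))`
coordinate-wise. -/
def Centered {A B : Type*} {d : ℕ} (ω₀ : A → FWord B d)
    (k : Fin d → ℤ) (x : Config A d) : Prop :=
  ∀ j, 0 ≤ k j ∧ k j < ((ω₀ (x 0)).1 j : ℤ)

/-- `ω` is recognizable in `X`: every configuration has at most one centered
`ω`-representation with `x ∈ X`. -/
def Recognizable {A B : Type*} {d : ℕ} (ω₀ : A → FWord B d)
    (X : Set (Config A d)) : Prop :=
  ∀ (y : Config B d) (k k' : Fin d → ℤ) (x x' : Config A d),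
    x ∈ X → x' ∈ X →
    OmegaRep ω₀ y k x → Centered ω₀ k x →
    OmegaRep ω₀ y k' x' → Centered ω₀ k' x' → k = k' ∧ x = x'

/-- A set of configurations is aperiodic if it is nonempty and contains no
point with a nontrivial period. -/
def Aperiodic {A : Type*} {d : ℕ} (X : Set (Config A d)) : Prop :=
  X.Nonempty ∧ ∀ x ∈ X, ∀ p : Fin d → ℤ, p ≠ 0 → shift p x ≠ x

/-- The domino `b ⊙^i c` in direction `e i`: the `d`-dimensional word of shape
`(1,…,1) + e i` with first letter `b` and second letter `c`. -/
def domino {B : Type*} {d : ℕ} (i : Fin d) (b c : B) : FWord B d :=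
  ⟨fun j => if j = i then 2 else 1, fun a => if (a i).1 = 0 then b else c⟩

/-- The Wang shift of a Wang tile set `T` (tiles are tuples
`(right, top, left, bottom)` of colors): all valid tilings `ℤ² → T`. -/
def WangShift {V H : Type} (T : Set (V × H × V × H)) :
    Set (Config (V × H × V × H) 2) :=
  {x | ∀ m : Fin 2 → ℤ, x m ∈ T ∧
    (x m).1 = (x (m + unitv 0)).2.2.1 ∧
    (x m).2.1 = (x (m + unitv 1)).2.2.2}

/-- `M` is a set of markers of `T` in direction `e i`: it is a nonempty proper
subset of `T`, two markers are never adjacent in direction `e i` in a valid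
tiling, and in the other direction a marker is adjacent only to markers. -/
def IsMarkers {V H : Type} (T M : Set (V × H × V × H)) (i : Fin 2) : Prop :=
  M.Nonempty ∧ M ⊂ T ∧ ∀ x ∈ WangShift T, ∀ m : Fin 2 → ℤ,
    ¬(x m ∈ M ∧ x (m + unitv i) ∈ M) ∧
    ∀ j, j ≠ i → (x m ∈ M ↔ x (m + unitv j) ∈ M)

namespace WangAux

lemma fin2cases (j : Fin 2) : j = 0 ∨ j = 1 := by
  fin_cases j
  · exact Or.inl rfl
  · exact Or.inr rfl

def v2 (a b : ℤ) : Fin 2 → ℤ := fun j => if j = 0 then a else b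

lemma v2_eta (n : Fin 2 → ℤ) : n = v2 (n 0) (n 1) := by
  funext j; rcases fin2cases j with h | h <;> subst h <;> simp [v2]

lemma v2_add (a b a' b' : ℤ) : v2 a b + v2 a' b' = v2 (a + a') (b + b') := by
  funext j; rcases fin2cases j with h | h <;> subst h <;> simp [v2]

lemma unitv0 : unitv (0 : Fin 2) = v2 1 0 := by
  funext j; rcases fin2cases j with h | h <;> subst h <;> simp [v2, unitv]

lemma unitv1 : unitv (1 : Fin 2) = v2 0 1 := by
  funext j; rcases fin2cases j with h | h <;> subst h <;> simp [v2, unitv]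

def stair (w : ℤ → ℤ) : ℤ → ℤ := fun n =>
  if 0 ≤ n then ∑ k ∈ Finset.range n.toNat, w k
  else -∑ k ∈ Finset.range (-n).toNat, w (n + k)

lemma stair_zero (w : ℤ → ℤ) : stair w 0 = 0 := by simp [stair]

lemma stair_succ (w : ℤ → ℤ) (n : ℤ) : stair w (n + 1) = stair w n + w n := by
  rcases le_or_gt 0 n with h | h
  · have h2 : (n + 1).toNat = n.toNat + 1 := by omega
    have h3 : (n.toNat : ℤ) = n := by omega
    simp only [stair, if_pos h, if_pos (by omega : (0:ℤ) ≤ n + 1), h2,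
      Finset.sum_range_succ, h3]
  · rcases eq_or_lt_of_le (by omega : n + 1 ≤ 0) with h0 | h0
    · have hn : n = -1 := by omega
      subst hn
      norm_num [stair]
    · have h1 : ¬ (0:ℤ) ≤ n + 1 := by omega
      have h4 : (-n).toNat = (-(n + 1)).toNat + 1 := by omega
      simp only [stair, if_neg h1, if_neg (by omega : ¬ (0:ℤ) ≤ n), h4,
        Finset.sum_range_succ']
      have he : ∀ k ∈ Finset.range (-(n + 1)).toNat,
          w (n + (↑(k + 1) : ℤ)) = w (n + 1 + ↑k) := by
        intro k _; congr 1; push_cast; ring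
      rw [Finset.sum_congr rfl he]
      push_cast
      ring_nf

lemma stair_add_le (w : ℤ → ℤ) (hw : ∀ n, 1 ≤ w n) {m n : ℤ} (h : m ≤ n) :
    stair w m + (n - m) ≤ stair w n := by
  refine Int.le_induction (motive := fun n _ => stair w m + (n - m) ≤ stair w n) (by omega) ?_ n h
  intro k hk ih
  have := stair_succ w k
  have := hw k
  omega

lemma stair_mono (w : ℤ → ℤ) (hw : ∀ n, 1 ≤ w n) {m n : ℤ} (h : m < n) :
    stair w m < stair w n := by
  have := stair_add_le w hw (le_of_lt h)
  omega

lemma stair_cover (w : ℤ → ℤ) (hw : ∀ n, 1 ≤ w n) (c : ℤ) :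
    ∃ n, stair w n ≤ c ∧ c < stair w (n + 1) := by
  set n0 : ℤ := min c 0 with hn0
  have h0 : stair w n0 ≤ c := by
    have h1 : stair w n0 + (0 - n0) ≤ stair w 0 := stair_add_le w hw (by omega)
    rw [stair_zero] at h1
    omega
  have hne : ∃ k : ℕ, c < stair w (n0 + k + 1) := by
    refine ⟨(c - stair w n0).toNat, ?_⟩
    have h1 := stair_add_le w hw (show n0 ≤ n0 + (c - stair w n0).toNat + 1 by omega)
    omega
  classical
  set k := Nat.find hne with hk
  have hk1 : c < stair w (n0 + k + 1) := Nat.find_spec hne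
  refine ⟨n0 + k, ?_, hk1⟩
  rcases Nat.eq_zero_or_pos k with h | h
  · rw [h]; simpa using h0
  · have h2 := Nat.find_min hne (m := k - 1) (by omega)
    push_neg at h2
    have h3 : n0 + ↑(k - 1) + 1 = n0 + (k : ℤ) := by omega
    rw [h3] at h2
    exact h2

lemma stair_unique (w : ℤ → ℤ) (hw : ∀ n, 1 ≤ w n) {n n' c : ℤ}
    (h1 : stair w n ≤ c) (h2 : c < stair w (n + 1))
    (h3 : stair w n' ≤ c) (h4 : c < stair w (n' + 1)) : n = n' := by
  rcases lt_trichotomy n n' with h | h | h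
  · have := stair_add_le w hw (show n + 1 ≤ n' by omega)
    omega
  · exact h
  · have := stair_add_le w hw (show n' + 1 ≤ n by omega)
    omega

end WangAux
namespace WangAux

@[simp] lemma v2_app0 (a b : ℤ) : v2 a b 0 = a := rfl

@[simp] lemma v2_app1 (a b : ℤ) : v2 a b 1 = b := by simp [v2]

lemma smul_unitv0 (c : ℤ) : c • unitv (0 : Fin 2) = v2 c 0 := by
  funext j; rcases fin2cases j with h | h <;> subst h <;>
    simp [unitv, v2]

lemma smul_unitv1 (c : ℤ) : c • unitv (1 : Fin 2) = v2 0 c := by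
  funext j; rcases fin2cases j with h | h <;> subst h <;>
    simp [unitv, v2]

lemma v2_add_unitv0 (a b : ℤ) : v2 a b + unitv 0 = v2 (a + 1) b := by
  rw [unitv0, v2_add, add_zero]

lemma v2_add_unitv1 (a b : ℤ) : v2 a b + unitv 1 = v2 a (b + 1) := by
  rw [unitv1, v2_add, add_zero]

lemma zero_eq_v2 : (0 : Fin 2 → ℤ) = v2 0 0 := by
  funext j; rcases fin2cases j with h | h <;> subst h <;> simp [v2]

/-- Uniqueness of a function `p` on `ℤ²` satisfying the increment recurrence. -/
lemma p_unique (δ : (Fin 2 → ℤ) → Fin 2 → ℤ) (p q : (Fin 2 → ℤ) → (Fin 2 → ℤ))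
    (hp : ∀ (n : Fin 2 → ℤ) (j : Fin 2), p (n + unitv j) = p n + (δ n j) • unitv j)
    (hq : ∀ (n : Fin 2 → ℤ) (j : Fin 2), q (n + unitv j) = q n + (δ n j) • unitv j)
    (h0 : p 0 = q 0) : p = q := by
  have hax : ∀ a : ℤ, p (v2 a 0) = q (v2 a 0) := by
    intro a
    induction a using Int.induction_on with
    | zero => rw [← zero_eq_v2]; exact h0
    | succ i ih =>
        have h1 := hp (v2 i 0) 0
        have h2 := hq (v2 i 0) 0
        rw [v2_add_unitv0] at h1 h2
        rw [h1, h2, ih]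
    | pred i ih =>
        have h1 := hp (v2 (-i - 1) 0) 0
        have h2 := hq (v2 (-i - 1) 0) 0
        rw [v2_add_unitv0] at h1 h2
        have he : (-i : ℤ) - 1 + 1 = -i := by ring
        rw [he] at h1 h2
        have := h1.symm.trans (ih.trans h2)
        simpa using this
  have hall : ∀ a b : ℤ, p (v2 a b) = q (v2 a b) := by
    intro a b
    induction b using Int.induction_on with
    | zero => exact hax a
    | succ i ih =>
        have h1 := hp (v2 a i) 1
        have h2 := hq (v2 a i) 1
        rw [v2_add_unitv1] at h1 h2
        rw [h1, h2, ih]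
    | pred i ih =>
        have h1 := hp (v2 a (-i - 1)) 1
        have h2 := hq (v2 a (-i - 1)) 1
        rw [v2_add_unitv1] at h1 h2
        have he : (-i : ℤ) - 1 + 1 = -i := by ring
        rw [he] at h1 h2
        have := h1.symm.trans (ih.trans h2)
        simpa using this
  funext n
  rw [v2_eta n]
  exact hall (n 0) (n 1)

end WangAux
namespace WangAux
namespace Core0
variable {V H : Type}

/-- Tile of the new set coding a single letter. -/
def L (t : V × H × V × H) : V × (H ⊕ H × H × V) × V × (H ⊕ H × H × V) :=
  (t.1, Sum.inl t.2.1, t.2.2.1, Sum.inl t.2.2.2)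

/-- Tile of the new set coding a horizontal domino `t t'`, with extra color `w`
recording the right color of the tile above `t`. -/
def F (t t' : V × H × V × H) (w : V) :
    V × (H ⊕ H × H × V) × V × (H ⊕ H × H × V) :=
  (t'.1, Sum.inr (t.2.1, t'.2.1, w), t.2.2.1, Sum.inr (t.2.2.2, t'.2.2.2, t.1))

/-- Decoding map: the morphism `ω₀`. -/
def dec (t₀ : V × H × V × H) :
    V × (H ⊕ H × H × V) × V × (H ⊕ H × H × V) → FWord (V × H × V × H) 2
  | (r, Sum.inl h1, l, Sum.inl h2) => letter 2 (r, h1, l, h2)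
  | (r, Sum.inr (a1, a2, _), l, Sum.inr (b1, b2, v)) =>
      domino 0 (v, a1, l, b1) (r, a2, v, b2)
  | (_, Sum.inl _, _, Sum.inr _) => letter 2 t₀
  | (_, Sum.inr _, _, Sum.inl _) => letter 2 t₀

lemma dec_L (t₀ t : V × H × V × H) : dec t₀ (L t) = letter 2 t := rfl

lemma dec_F (t₀ t t' : V × H × V × H) (w : V) (h : t'.2.2.1 = t.1) :
    dec t₀ (F t t' w) = domino 0 t t' := by
  obtain ⟨r, a, l, b⟩ := t
  obtain ⟨r', a', l', b'⟩ := t'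
  simp only [F, dec]
  simp at h
  rw [h]

/-- The new tile set. -/
def S (T M : Set (V × H × V × H)) : Set (V × (H ⊕ H × H × V) × V × (H ⊕ H × H × V)) :=
  {s | (∃ t, t ∈ T ∧ t ∉ M ∧ s = L t) ∨
       (∃ t t' w, t ∈ T ∧ t ∉ M ∧ t' ∈ T ∧ t' ∈ M ∧ t'.2.2.1 = t.1 ∧ s = F t t' w)}

lemma dec_shape1 (t₀ : V × H × V × H) (s) : (dec t₀ s).1 1 = 1 := by
  obtain ⟨r, a | a, l, b | b⟩ := s <;> rfl

lemma dec_shape0_pos (t₀ : V × H × V × H) (s) : 1 ≤ (dec t₀ s).1 0 := by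
  obtain ⟨r, a | a, l, b | b⟩ := s <;> simp [dec, letter, domino]

lemma dec_shape0_le (t₀ : V × H × V × H) (s) : (dec t₀ s).1 0 ≤ 2 := by
  obtain ⟨r, a | a, l, b | b⟩ := s <;> simp [dec, letter, domino]

lemma dec_L_shape0 (t₀ t : V × H × V × H) : (dec t₀ (L t)).1 0 = 1 := rfl

lemma dec_F_shape0 (t₀ t t' : V × H × V × H) (w) : (dec t₀ (F t t' w)).1 0 = 2 := rfl

end Core0
end WangAux
namespace WangAux

lemma v2_congr {a b a' b' : ℤ} (h1 : a = a') (h2 : b = b') : v2 a b = v2 a' b' := by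
  rw [h1, h2]

lemma add_unitv0_app0 (n : Fin 2 → ℤ) : (n + unitv (0 : Fin 2)) 0 = n 0 + 1 := by
  simp [unitv]
lemma add_unitv0_app1 (n : Fin 2 → ℤ) : (n + unitv (0 : Fin 2)) 1 = n 1 := by
  simp [unitv]
lemma add_unitv1_app0 (n : Fin 2 → ℤ) : (n + unitv (1 : Fin 2)) 0 = n 0 := by
  simp [unitv]
lemma add_unitv1_app1 (n : Fin 2 → ℤ) : (n + unitv (1 : Fin 2)) 1 = n 1 + 1 := by
  simp [unitv]

namespace Core0
variable {V H : Type}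

/-- Width of the block in column `a` of `x`. -/
def Wd (t₀ : V × H × V × H) (x : Config (V × (H ⊕ H × H × V) × V × (H ⊕ H × H × V)) 2)
    (a : ℤ) : ℤ := ((dec t₀ (x (v2 a 0))).1 0 : ℤ)

lemma Wd_pos (t₀ : V × H × V × H) (x) (a : ℤ) : 1 ≤ Wd t₀ x a := by
  have := dec_shape0_pos t₀ (x (v2 a 0))
  unfold Wd; exact_mod_cast this

lemma Wd_le (t₀ : V × H × V × H) (x) (a : ℤ) : Wd t₀ x a ≤ 2 := by
  have := dec_shape0_le t₀ (x (v2 a 0))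
  unfold Wd; exact_mod_cast this

lemma width_step (t₀ : V × H × V × H) {T M : Set (V × H × V × H)}
    {x : Config (V × (H ⊕ H × H × V) × V × (H ⊕ H × H × V)) 2}
    (hx : x ∈ WangShift (S T M)) (n : Fin 2 → ℤ) :
    (dec t₀ (x (n + unitv 1))).1 0 = (dec t₀ (x n)).1 0 := by
  obtain ⟨hmem, _, hv⟩ := hx n
  obtain ⟨hmem', _, _⟩ := hx (n + unitv 1)
  rcases hmem with ⟨t, _, _, hs⟩ | ⟨t, t', w, _, _, _, _, _, hs⟩ <;>
    rcases hmem' with ⟨u, _, _, hs'⟩ | ⟨u, u', v, _, _, _, _, _, hs'⟩ <;>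
      rw [hs, hs'] at hv ⊢ <;> simp [L, F, dec, letter, domino] at hv ⊢

lemma width_col (t₀ : V × H × V × H) {T M : Set (V × H × V × H)}
    {x : Config (V × (H ⊕ H × H × V) × V × (H ⊕ H × H × V)) 2}
    (hx : x ∈ WangShift (S T M)) (n : Fin 2 → ℤ) :
    ((dec t₀ (x n)).1 0 : ℤ) = Wd t₀ x (n 0) := by
  have key : ∀ a b : ℤ, (dec t₀ (x (v2 a b))).1 0 = (dec t₀ (x (v2 a 0))).1 0 := by
    intro a b
    induction b using Int.induction_on with
    | zero => rfl
    | succ i ih => rw [← v2_add_unitv1, width_step t₀ hx, ih]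
    | pred i ih =>
        have h := width_step t₀ hx (v2 a (-i - 1))
        rw [v2_add_unitv1, (by ring : (-(i:ℤ) - 1 + 1) = -(i:ℤ))] at h
        rw [← h, ih]
  have h2 : (dec t₀ (x n)).1 0 = (dec t₀ (x (v2 (n 0) 0))).1 0 := by
    conv_lhs => rw [v2_eta n]
    exact key _ _
  unfold Wd; exact_mod_cast h2

/-- Standard placement function for a representation. -/
def pst (t₀ : V × H × V × H)
    (x : Config (V × (H ⊕ H × H × V) × V × (H ⊕ H × H × V)) 2) (k : Fin 2 → ℤ) (n : Fin 2 → ℤ) : Fin 2 → ℤ :=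
  v2 (stair (Wd t₀ x) (n 0) - k 0) (n 1 - k 1)

lemma pst_inc (t₀ : V × H × V × H) {T M : Set (V × H × V × H)}
    {x : Config (V × (H ⊕ H × H × V) × V × (H ⊕ H × H × V)) 2}
    (hx : x ∈ WangShift (S T M)) (k : Fin 2 → ℤ) :
    ∀ (n : Fin 2 → ℤ) (j : Fin 2),
      pst t₀ x k (n + unitv j) = pst t₀ x k n + (((dec t₀ (x n)).1 j : ℤ) • unitv j) := by
  · intro n j
    rcases fin2cases j with hj | hj <;> subst hj
    · show pst t₀ x k (n + unitv 0)
        = pst t₀ x k n + (((dec t₀ (x n)).1 0 : ℤ) • unitv 0)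
      rw [width_col t₀ hx, smul_unitv0]
      unfold pst
      rw [v2_add, add_unitv0_app0, add_unitv0_app1, stair_succ]
      exact v2_congr (by ring) (by ring)
    · show pst t₀ x k (n + unitv 1)
        = pst t₀ x k n + (((dec t₀ (x n)).1 1 : ℤ) • unitv 1)
      rw [dec_shape1, smul_unitv1]
      unfold pst
      rw [v2_add, add_unitv1_app0, add_unitv1_app1]
      exact v2_congr (by ring) (by push_cast; ring)

lemma rep_p_eq (t₀ : V × H × V × H) {T M : Set (V × H × V × H)}
    {x : Config (V × (H ⊕ H × H × V) × V × (H ⊕ H × H × V)) 2}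
    (hx : x ∈ WangShift (S T M)) {k : Fin 2 → ℤ} {p : (Fin 2 → ℤ) → Fin 2 → ℤ}
    (h0 : p 0 = -k)
    (hinc : ∀ (n : Fin 2 → ℤ) (j : Fin 2),
      p (n + unitv j) = p n + (((dec t₀ (x n)).1 j : ℤ) • unitv j)) :
    p = pst t₀ x k := by
  refine p_unique (fun n j => ((dec t₀ (x n)).1 j : ℤ)) p (pst t₀ x k) hinc
    (pst_inc t₀ hx k) ?_
  · rw [h0]
    unfold pst
    funext j
    rcases fin2cases j with hj | hj <;> subst hj <;>
      simp [stair_zero, v2]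

end Core0
end WangAux
namespace WangAux
namespace Core0
variable {V H : Type}

abbrev TA (V H : Type) := V × H × V × H
abbrev TA' (V H : Type) := V × (H ⊕ H × H × V) × V × (H ⊕ H × H × V)

lemma pst_v2 (t₀ : TA V H) (x : Config (TA' V H) 2) (k : Fin 2 → ℤ) (b r : ℤ) :
    pst t₀ x k (v2 b r) = v2 (stair (Wd t₀ x) b - k 0) (r - k 1) := by
  unfold pst
  rw [v2_app0, v2_app1]

lemma rep_eval (t₀ : TA V H) {T M : Set (TA V H)} {x : Config (TA' V H) 2}
    (hx : x ∈ WangShift (S T M)) {y : Config (TA V H) 2} {k : Fin 2 → ℤ}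
    (hrep : OmegaRep (dec t₀) y k x) (n : Fin 2 → ℤ) :
    (∀ t, x n = L t → y (pst t₀ x k n) = t) ∧
    (∀ t t' w, x n = F t t' w → t'.2.2.1 = t.1 →
      y (pst t₀ x k n) = t ∧ y (pst t₀ x k n + unitv 0) = t') := by
  obtain ⟨p, h0, hinc, hval⟩ := hrep
  have hp : p = pst t₀ x k := rep_p_eq t₀ hx h0 hinc
  subst hp
  constructor
  · intro t hs
    have h := hval n
    rw [hs, dec_L] at h
    have h2 := h (fun _ => ⟨0, Nat.one_pos⟩)
    simpa [letter] using h2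
  · intro t t' w hs hshared
    have h := hval n
    rw [hs, dec_F t₀ t t' w hshared] at h
    constructor
    · have h2 := h (fun j => ⟨0, by
        rcases fin2cases j with hj | hj <;> subst hj <;> simp [domino]⟩)
      simpa [domino] using h2
    · have h2 := h (fun j => ⟨if j = 0 then 1 else 0, by
        rcases fin2cases j with hj | hj <;> subst hj <;> simp [domino]⟩)
      have hpos : (fun j => pst t₀ x k n j +
          (((if j = 0 then 1 else 0 : ℕ) : ℤ))) = pst t₀ x k n + unitv 0 := by
        funext j
        rcases fin2cases j with hj | hj <;> subst hj <;> simp [unitv]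
      simp only [domino] at h2
      rw [← hpos]
      convert h2 using 2
      simp
end Core0
end WangAux
namespace WangAux
namespace Core0
variable {V H : Type}

lemma kindL (t₀ : TA V H) {T M : Set (TA V H)} {x : Config (TA' V H) 2}
    (hx : x ∈ WangShift (S T M)) (a r : ℤ) (hw : Wd t₀ x a = 1) :
    ∃ t, t ∈ T ∧ t ∉ M ∧ x (v2 a r) = L t := by
  rcases (hx (v2 a r)).1 with ⟨t, h1, h2, hs⟩ | ⟨t, t', w, h1, h2, h3, h4, h5, hs⟩
  · exact ⟨t, h1, h2, hs⟩
  · exfalso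
    have hwc := width_col t₀ hx (v2 a r)
    rw [hs, dec_F_shape0, v2_app0, hw] at hwc
    norm_num at hwc

lemma kindF (t₀ : TA V H) {T M : Set (TA V H)} {x : Config (TA' V H) 2}
    (hx : x ∈ WangShift (S T M)) (a r : ℤ) (hw : Wd t₀ x a = 2) :
    ∃ t t' w, t ∈ T ∧ t ∉ M ∧ t' ∈ T ∧ t' ∈ M ∧ t'.2.2.1 = t.1 ∧
      x (v2 a r) = F t t' w := by
  rcases (hx (v2 a r)).1 with ⟨t, h1, h2, hs⟩ | ⟨t, t', w, h1, h2, h3, h4, h5, hs⟩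
  · exfalso
    have hwc := width_col t₀ hx (v2 a r)
    rw [hs, dec_L_shape0, v2_app0, hw] at hwc
    norm_num at hwc
  · exact ⟨t, t', w, h1, h2, h3, h4, h5, hs⟩

lemma rep_valid (t₀ : TA V H) {T M : Set (TA V H)}
    {x : Config (TA' V H) 2} (hx : x ∈ WangShift (S T M))
    {y : Config (TA V H) 2} {k : Fin 2 → ℤ} (hrep : OmegaRep (dec t₀) y k x) :
    y ∈ WangShift T := by
  have hWpos := Wd_pos t₀ x
  have hWle := Wd_le t₀ x
  have hss := stair_succ (Wd t₀ x)
  have evL : ∀ a r' t, x (v2 a (r' + k 1)) = L t →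
      y (v2 (stair (Wd t₀ x) a - k 0) r') = t := by
    intro a r' t hs
    have h := (rep_eval t₀ hx hrep (v2 a (r' + k 1))).1 t hs
    rw [pst_v2, (by ring : r' + k 1 - k 1 = r')] at h
    exact h
  have evF : ∀ a r' t t' w, x (v2 a (r' + k 1)) = F t t' w → t'.2.2.1 = t.1 →
      y (v2 (stair (Wd t₀ x) a - k 0) r') = t ∧
      y (v2 (stair (Wd t₀ x) a - k 0 + 1) r') = t' := by
    intro a r' t t' w hs hsh
    have h := (rep_eval t₀ hx hrep (v2 a (r' + k 1))).2 t t' w hs hsh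
    rw [pst_v2, (by ring : r' + k 1 - k 1 = r'), v2_add_unitv0] at h
    exact h
  -- the first tile of the block in column `a` at row `r'` of `y`
  have evFst : ∀ a r', ∃ u, u ∈ T ∧ u ∉ M ∧
      y (v2 (stair (Wd t₀ x) a - k 0) r') = u ∧
      (x (v2 a (r' + k 1))).2.2.1 = u.2.2.1 := by
    intro a r'
    rcases (by have := Wd_pos t₀ x a; have := Wd_le t₀ x a; omega :
        Wd t₀ x a = 1 ∨ Wd t₀ x a = 2) with hw | hw
    · obtain ⟨u, h1, h2, hs⟩ := kindL t₀ hx a (r' + k 1) hw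
      exact ⟨u, h1, h2, evL a r' u hs, by rw [hs]; rfl⟩
    · obtain ⟨u, u', w, h1, h2, h3, h4, h5, hs⟩ := kindF t₀ hx a (r' + k 1) hw
      exact ⟨u, h1, h2, (evF a r' u u' w hs h5).1, by rw [hs]; rfl⟩
  intro m
  obtain ⟨c, r, rfl⟩ : ∃ c r, m = v2 c r := ⟨m 0, m 1, v2_eta m⟩
  obtain ⟨a, ha1, ha2⟩ := stair_cover (Wd t₀ x) hWpos (c + k 0)
  rw [v2_add_unitv0, v2_add_unitv1]
  rcases (by have := hWpos a; have := hWle a; omega :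
      Wd t₀ x a = 1 ∨ Wd t₀ x a = 2) with hw | hw
  · -- column `a` is a letter column, and `c` is its unique cell
    obtain ⟨t, ht1, ht2, hs⟩ := kindL t₀ hx a (r + k 1) hw
    have hc : c = stair (Wd t₀ x) a - k 0 := by
      have := hss a; omega
    have hy : y (v2 c r) = t := by rw [hc]; exact evL a r t hs
    refine ⟨by rw [hy]; exact ht1, ?_, ?_⟩
    · -- horizontal adjacency
      obtain ⟨u, hu1, hu2, hyu, hul⟩ := evFst (a + 1) r
      have hc1 : c + 1 = stair (Wd t₀ x) (a + 1) - k 0 := by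
        have := hss a; omega
      rw [hc1, hyu, hy]
      have hh := (hx (v2 a (r + k 1))).2.1
      rw [v2_add_unitv0, hs] at hh
      exact hh.trans hul
    · -- vertical adjacency
      obtain ⟨u, hu1, hu2, hs'⟩ := kindL t₀ hx a (r + 1 + k 1) hw
      have hyu : y (v2 c (r + 1)) = u := by rw [hc]; exact evL a (r + 1) u hs'
      have hv := (hx (v2 a (r + k 1))).2.2
      rw [v2_add_unitv1, (by ring : r + k 1 + 1 = r + 1 + k 1), hs, hs'] at hv
      rw [hy, hyu]
      simpa [L] using hv
  · -- column `a` is a fused column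
    obtain ⟨t, t', w, ht1, ht2, ht3, ht4, hsh, hs⟩ := kindF t₀ hx a (r + k 1) hw
    obtain ⟨hyt, hyt'⟩ := evF a r t t' w hs hsh
    obtain ⟨u, u', w'', hu1, hu2, hu3, hu4, hsh', hs''⟩ :=
      kindF t₀ hx a (r + 1 + k 1) hw
    obtain ⟨hyu, hyu'⟩ := evF a (r + 1) u u' w'' hs'' hsh'
    have hv := (hx (v2 a (r + k 1))).2.2
    rw [v2_add_unitv1, (by ring : r + k 1 + 1 = r + 1 + k 1), hs, hs''] at hv
    simp only [F, Sum.inr.injEq, Prod.mk.injEq] at hv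
    rcases (by have := hss a; omega : c = stair (Wd t₀ x) a - k 0 ∨
        c = stair (Wd t₀ x) a - k 0 + 1) with hc | hc
    · -- first cell of the fused block
      have hy : y (v2 c r) = t := by rw [hc]; exact hyt
      refine ⟨by rw [hy]; exact ht1, ?_, ?_⟩
      · have hc1 : c + 1 = stair (Wd t₀ x) a - k 0 + 1 := by omega
        rw [hc1, hyt', hy]
        exact hsh.symm
      · have hyu2 : y (v2 c (r + 1)) = u := by rw [hc]; exact hyu
        rw [hy, hyu2]
        exact hv.1
    · -- second cell of the fused block
      have hy : y (v2 c r) = t' := by rw [hc]; exact hyt'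
      refine ⟨by rw [hy]; exact ht3, ?_, ?_⟩
      · obtain ⟨e, he1, he2, hye, hel⟩ := evFst (a + 1) r
        have hc1 : c + 1 = stair (Wd t₀ x) (a + 1) - k 0 := by
          have := hss a; omega
        rw [hc1, hye, hy]
        have hh := (hx (v2 a (r + k 1))).2.1
        rw [v2_add_unitv0, hs] at hh
        exact hh.trans hel
      · have hyu2 : y (v2 c (r + 1)) = u' := by rw [hc]; exact hyu'
        rw [hy, hyu2]
        exact hv.2.1

end Core0
end WangAux
namespace WangAux
namespace Core0
variable {V H : Type}

def fstT (t₀ : TA V H) : TA' V H → TA V H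
  | (r, Sum.inl h1, l, Sum.inl h2) => (r, h1, l, h2)
  | (_, Sum.inr (a1, _, _), l, Sum.inr (b1, _, v)) => (v, a1, l, b1)
  | (_, Sum.inl _, _, Sum.inr _) => t₀
  | (_, Sum.inr _, _, Sum.inl _) => t₀

def sndT (t₀ : TA V H) : TA' V H → TA V H
  | (r, Sum.inl h1, l, Sum.inl h2) => (r, h1, l, h2)
  | (r, Sum.inr (_, a2, _), _, Sum.inr (_, b2, v)) => (r, a2, v, b2)
  | (_, Sum.inl _, _, Sum.inr _) => t₀
  | (_, Sum.inr _, _, Sum.inl _) => t₀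

noncomputable def blk (t₀ : TA V H) (x : Config (TA' V H) 2) (c : ℤ) : ℤ :=
  (stair_cover (Wd t₀ x) (Wd_pos t₀ x) c).choose

lemma blk_spec (t₀ : TA V H) (x : Config (TA' V H) 2) (c : ℤ) :
    stair (Wd t₀ x) (blk t₀ x c) ≤ c ∧ c < stair (Wd t₀ x) (blk t₀ x c + 1) :=
  (stair_cover (Wd t₀ x) (Wd_pos t₀ x) c).choose_spec

lemma blk_eq (t₀ : TA V H) (x : Config (TA' V H) 2) {c a : ℤ}
    (h1 : stair (Wd t₀ x) a ≤ c) (h2 : c < stair (Wd t₀ x) (a + 1)) :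
    blk t₀ x c = a :=
  stair_unique (Wd t₀ x) (Wd_pos t₀ x) (blk_spec t₀ x c).1 (blk_spec t₀ x c).2 h1 h2

/-- The configuration of `ℤ²` decoded from an `S`-tiling `x`. -/
noncomputable def decCfg (t₀ : TA V H) (x : Config (TA' V H) 2) :
    Config (TA V H) 2 := fun m =>
  if m 0 = stair (Wd t₀ x) (blk t₀ x (m 0))
  then fstT t₀ (x (v2 (blk t₀ x (m 0)) (m 1)))
  else sndT t₀ (x (v2 (blk t₀ x (m 0)) (m 1)))

lemma exists_rep (t₀ : TA V H) {T M : Set (TA V H)} {x : Config (TA' V H) 2}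
    (hx : x ∈ WangShift (S T M)) :
    OmegaRep (dec t₀) (decCfg t₀ x) 0 x := by
  refine ⟨pst t₀ x 0, ?_, pst_inc t₀ hx 0, ?_⟩
  · unfold pst
    funext j
    rcases fin2cases j with hj | hj <;> subst hj <;> simp [stair_zero, v2]
  · intro n
    have hblk : blk t₀ x (stair (Wd t₀ x) (n 0)) = n 0 :=
      blk_eq t₀ x le_rfl (by rw [stair_succ]; have := Wd_pos t₀ x (n 0); omega)
    rcases (hx n).1 with ⟨t, h1, h2, hs⟩ | ⟨t, t', w, h1, h2, h3, h4, hsh, hs⟩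
    · rw [hs, dec_L]
      intro a
      have ha : ∀ j, ((a j).1 : ℤ) = 0 := by
        intro j
        have := (a j).2
        simp only [letter] at this
        omega
      have hm : (fun j => pst t₀ x 0 n j + ((a j).1 : ℤ)) =
          v2 (stair (Wd t₀ x) (n 0)) (n 1) := by
        funext j
        rw [ha j, add_zero]
        unfold pst
        rcases fin2cases j with hj | hj <;> subst hj <;> simp
      rw [hm]
      show decCfg t₀ x _ = t
      unfold decCfg
      rw [v2_app0, v2_app1, hblk, if_pos rfl, ← v2_eta n, hs]
      rfl
    · rw [hs, dec_F t₀ t t' w hsh]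
      intro a
      have hW2 : Wd t₀ x (n 0) = 2 := by
        have := width_col t₀ hx n
        rw [hs, dec_F_shape0] at this
        omega
      have ha1 : ∀ j, j = 1 → ((a j).1 : ℤ) = 0 := by
        intro j hj
        subst hj
        have h := (a 1).2
        have he : (domino (0 : Fin 2) t t').1 1 = 1 := by simp [domino]
        omega
      have hb : (a 0).1 < 2 := by
        have := (a 0).2
        simpa [domino] using this
      have hm : (fun j => pst t₀ x 0 n j + ((a j).1 : ℤ)) =
          v2 (stair (Wd t₀ x) (n 0) + (a 0).1) (n 1) := by
        funext j
        rcases fin2cases j with hj | hj <;> subst hj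
        · unfold pst; simp
        · rw [ha1 1 rfl, add_zero]; unfold pst; simp
      rw [hm]
      have hblk2 : blk t₀ x (stair (Wd t₀ x) (n 0) + (a 0).1) = n 0 := by
        refine blk_eq t₀ x (by omega) ?_
        rw [stair_succ, hW2]
        omega
      show decCfg t₀ x _ = _
      unfold decCfg
      rw [v2_app0, v2_app1, hblk2]
      rcases (by omega : (a 0).1 = 0 ∨ (a 0).1 = 1) with h0 | h0 <;> rw [h0]
      · rw [if_pos (by norm_num), ← v2_eta n, hs]
        simp only [fstT, F, domino]
        rw [if_pos h0]
      · rw [if_neg (by have := Wd_pos t₀ x (n 0); intro hcon; omega),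
          ← v2_eta n, hs]
        have : sndT t₀ (F t t' w) = t' := by
          simp [sndT, F, ← hsh]
        rw [this]
        simp only [domino]
        rw [if_neg (by omega)]

lemma part2 (t₀ : TA V H) {T M : Set (TA V H)} {x : Config (TA' V H) 2}
    (hx : x ∈ WangShift (S T M)) :
    ∃ y ∈ WangShift T, OmegaRep (dec t₀) y 0 x :=
  ⟨decCfg t₀ x, rep_valid t₀ hx (exists_rep t₀ hx), exists_rep t₀ hx⟩

end Core0
end WangAux
namespace WangAux
namespace Core0
variable {V H : Type}

lemma evL (t₀ : TA V H) {T M : Set (TA V H)} {x : Config (TA' V H) 2}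
    (hx : x ∈ WangShift (S T M)) {y : Config (TA V H) 2} {k : Fin 2 → ℤ}
    (hrep : OmegaRep (dec t₀) y k x) (a r' : ℤ) (t : TA V H)
    (hs : x (v2 a (r' + k 1)) = L t) :
    y (v2 (stair (Wd t₀ x) a - k 0) r') = t := by
  have h := (rep_eval t₀ hx hrep (v2 a (r' + k 1))).1 t hs
  rw [pst_v2, (by ring : r' + k 1 - k 1 = r')] at h
  exact h

lemma evF (t₀ : TA V H) {T M : Set (TA V H)} {x : Config (TA' V H) 2}
    (hx : x ∈ WangShift (S T M)) {y : Config (TA V H) 2} {k : Fin 2 → ℤ}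
    (hrep : OmegaRep (dec t₀) y k x) (a r' : ℤ) (t t' : TA V H) (w : V)
    (hs : x (v2 a (r' + k 1)) = F t t' w) (hsh : t'.2.2.1 = t.1) :
    y (v2 (stair (Wd t₀ x) a - k 0) r') = t ∧
    y (v2 (stair (Wd t₀ x) a - k 0 + 1) r') = t' := by
  have h := (rep_eval t₀ hx hrep (v2 a (r' + k 1))).2 t t' w hs hsh
  rw [pst_v2, (by ring : r' + k 1 - k 1 = r'), v2_add_unitv0] at h
  exact h

lemma evFst (t₀ : TA V H) {T M : Set (TA V H)} {x : Config (TA' V H) 2}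
    (hx : x ∈ WangShift (S T M)) {y : Config (TA V H) 2} {k : Fin 2 → ℤ}
    (hrep : OmegaRep (dec t₀) y k x) (a r' : ℤ) :
    ∃ u, u ∈ T ∧ u ∉ M ∧ y (v2 (stair (Wd t₀ x) a - k 0) r') = u := by
  rcases (by have := Wd_pos t₀ x a; have := Wd_le t₀ x a; omega :
      Wd t₀ x a = 1 ∨ Wd t₀ x a = 2) with hw | hw
  · obtain ⟨u, h1, h2, hs⟩ := kindL t₀ hx a (r' + k 1) hw
    exact ⟨u, h1, h2, evL t₀ hx hrep a r' u hs⟩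
  · obtain ⟨u, u', w, h1, h2, h3, h4, h5, hs⟩ := kindF t₀ hx a (r' + k 1) hw
    exact ⟨u, h1, h2, (evF t₀ hx hrep a r' u u' w hs h5).1⟩

/-- The marker status of the tile of `y` right after (resp. at the end of) the
block in column `b` determines whether the block is fused. -/
lemma crit (t₀ : TA V H) {T M : Set (TA V H)} {x : Config (TA' V H) 2}
    (hx : x ∈ WangShift (S T M)) {y : Config (TA V H) 2} {k : Fin 2 → ℤ}
    (hrep : OmegaRep (dec t₀) y k x) (b : ℤ) :
    (Wd t₀ x b = 2 ↔ y (v2 (stair (Wd t₀ x) b + 1 - k 0) 0) ∈ M) ∧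
    (Wd t₀ x b = 2 ↔ y (v2 (stair (Wd t₀ x) (b + 1) - 1 - k 0) 0) ∈ M) := by
  rcases (by have := Wd_pos t₀ x b; have := Wd_le t₀ x b; omega :
      Wd t₀ x b = 1 ∨ Wd t₀ x b = 2) with hw | hw
  · obtain ⟨u, hu1, hu2, hyu⟩ := evFst t₀ hx hrep (b + 1) 0
    obtain ⟨t, ht1, ht2, hs⟩ := kindL t₀ hx b (0 + k 1) hw
    have hyt := evL t₀ hx hrep b 0 t hs
    have h1 : stair (Wd t₀ x) (b + 1) = stair (Wd t₀ x) b + 1 := by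
      rw [stair_succ]; omega
    constructor
    · rw [(by omega : stair (Wd t₀ x) b + 1 - k 0 =
        stair (Wd t₀ x) (b + 1) - k 0), hyu]
      exact ⟨fun h => by omega, fun h => absurd h hu2⟩
    · rw [(by omega : stair (Wd t₀ x) (b + 1) - 1 - k 0 =
        stair (Wd t₀ x) b - k 0), hyt]
      exact ⟨fun h => by omega, fun h => absurd h ht2⟩
  · obtain ⟨t, t', w, ht1, ht2, ht3, ht4, hsh, hs⟩ := kindF t₀ hx b (0 + k 1) hw
    have h2 := (evF t₀ hx hrep b 0 t t' w hs hsh).2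
    have h1 : stair (Wd t₀ x) (b + 1) = stair (Wd t₀ x) b + 2 := by
      rw [stair_succ]; omega
    constructor
    · rw [(by omega : stair (Wd t₀ x) b + 1 - k 0 =
        stair (Wd t₀ x) b - k 0 + 1), h2]
      exact ⟨fun _ => ht4, fun _ => hw⟩
    · rw [(by omega : stair (Wd t₀ x) (b + 1) - 1 - k 0 =
        stair (Wd t₀ x) b - k 0 + 1), h2]
      exact ⟨fun _ => ht4, fun _ => hw⟩

end Core0
end WangAux
namespace WangAux
namespace Core0
open scoped Classical
variable {V H : Type}

lemma cent_k1 (t₀ : TA V H) {x : Config (TA' V H) 2} {k : Fin 2 → ℤ}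
    (hcent : Centered (dec t₀) k x) : k 1 = 0 := by
  have h := hcent 1
  rw [dec_shape1] at h
  push_cast at h
  omega

lemma cent_k0 (t₀ : TA V H) {T M : Set (TA V H)} {x : Config (TA' V H) 2}
    (hx : x ∈ WangShift (S T M)) {y : Config (TA V H) 2} {k : Fin 2 → ℤ}
    (hrep : OmegaRep (dec t₀) y k x) (hcent : Centered (dec t₀) k x) :
    k 0 = if y (v2 0 0) ∈ M then 1 else 0 := by
  have hc := hcent 0
  have hw0 : ((dec t₀ (x 0)).1 0 : ℤ) = Wd t₀ x 0 := width_col t₀ hx 0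
  have hs0 : stair (Wd t₀ x) 0 = 0 := stair_zero _
  rcases (by have := Wd_pos t₀ x 0; have := Wd_le t₀ x 0; omega :
      Wd t₀ x 0 = 1 ∨ Wd t₀ x 0 = 2) with hw | hw
  · have hk0 : k 0 = 0 := by omega
    obtain ⟨t, ht1, ht2, hs⟩ := kindL t₀ hx 0 (0 + k 1) hw
    have hyt := evL t₀ hx hrep 0 0 t hs
    rw [(by omega : stair (Wd t₀ x) 0 - k 0 = 0)] at hyt
    rw [if_neg (by rw [hyt]; exact ht2)]
    exact hk0
  · obtain ⟨t, t', w, ht1, ht2, ht3, ht4, hsh, hs⟩ := kindF t₀ hx 0 (0 + k 1) hw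
    obtain ⟨hy1, hy2⟩ := evF t₀ hx hrep 0 0 t t' w hs hsh
    rcases (by omega : k 0 = 0 ∨ k 0 = 1) with hk0 | hk0
    · rw [(by omega : stair (Wd t₀ x) 0 - k 0 = 0)] at hy1
      rw [if_neg (by rw [hy1]; exact ht2)]
      exact hk0
    · rw [(by omega : stair (Wd t₀ x) 0 - k 0 + 1 = 0)] at hy2
      rw [if_pos (by rw [hy2]; exact ht4)]
      exact hk0

lemma recog (t₀ : TA V H) (T M : Set (TA V H)) :
    Recognizable (dec t₀) (WangShift (S T M)) := by
  intro y k k' x x' hx hx' hrep hcent hrep' hcent'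
  have hk1 : k 1 = 0 := cent_k1 t₀ hcent
  have hk1' : k' 1 = 0 := cent_k1 t₀ hcent'
  have hkk' : k = k' := by
    funext j
    rcases fin2cases j with hj | hj <;> subst hj
    · rw [cent_k0 t₀ hx hrep hcent, cent_k0 t₀ hx' hrep' hcent']
    · rw [hk1, hk1']
  obtain rfl := hkk'.symm
  refine ⟨rfl, ?_⟩
  -- the two staircases agree
  have hst : ∀ b : ℤ, stair (Wd t₀ x) b = stair (Wd t₀ x') b := by
    intro b
    induction b using Int.induction_on with
    | zero => rw [stair_zero, stair_zero]
    | succ i ih =>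
        rw [stair_succ, stair_succ, ih]
        have c1 := (crit t₀ hx hrep i).1
        have c2 := (crit t₀ hx' hrep' i).1
        rw [ih] at c1
        have hiff : Wd t₀ x i = 2 ↔ Wd t₀ x' i = 2 := c1.trans c2.symm
        have := Wd_pos t₀ x i; have := Wd_le t₀ x i
        have := Wd_pos t₀ x' i; have := Wd_le t₀ x' i
        omega
    | pred i ih =>
        have s1 : stair (Wd t₀ x) (-i) =
            stair (Wd t₀ x) (-i - 1) + Wd t₀ x (-i - 1) := by
          rw [← stair_succ]; congr 1; ring
        have s2 : stair (Wd t₀ x') (-i) =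
            stair (Wd t₀ x') (-i - 1) + Wd t₀ x' (-i - 1) := by
          rw [← stair_succ]; congr 1; ring
        have c1 := (crit t₀ hx hrep (-i - 1)).2
        have c2 := (crit t₀ hx' hrep' (-i - 1)).2
        rw [(by ring : (-(i:ℤ) - 1) + 1 = -i)] at c1 c2
        rw [ih] at c1
        have hiff : Wd t₀ x (-i - 1) = 2 ↔ Wd t₀ x' (-i - 1) = 2 := c1.trans c2.symm
        have := Wd_pos t₀ x (-i - 1); have := Wd_le t₀ x (-i - 1)
        have := Wd_pos t₀ x' (-i - 1); have := Wd_le t₀ x' (-i - 1)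
        omega
  have hWeq : ∀ b : ℤ, Wd t₀ x b = Wd t₀ x' b := by
    intro b
    have h1 := hst b
    have h2 := hst (b + 1)
    rw [stair_succ, stair_succ] at h2
    omega
  funext n
  obtain ⟨a, b, rfl⟩ : ∃ a b, n = v2 a b := ⟨n 0, n 1, v2_eta n⟩
  rcases (by have := Wd_pos t₀ x a; have := Wd_le t₀ x a; omega :
      Wd t₀ x a = 1 ∨ Wd t₀ x a = 2) with hw | hw
  · obtain ⟨t, ht1, ht2, hs⟩ := kindL t₀ hx a b hw
    obtain ⟨u, hu1, hu2, hs'⟩ := kindL t₀ hx' a b (by rw [← hWeq]; exact hw)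
    have hyt := evL t₀ hx hrep a b t
      (by rw [hk1, add_zero]; exact hs)
    have hyu := evL t₀ hx' hrep' a b u
      (by rw [hk1, add_zero]; exact hs')
    rw [← hst a] at hyu
    rw [hs, hs', hyt.symm.trans hyu]
  · obtain ⟨t, t', w, ht1, ht2, ht3, ht4, hsh, hs⟩ := kindF t₀ hx a b hw
    obtain ⟨u, u', w2, hu1, hu2, hu3, hu4, hsh', hs'⟩ :=
      kindF t₀ hx' a b (by rw [← hWeq]; exact hw)
    have hyt := evF t₀ hx hrep a b t t' w (by rw [hk1, add_zero]; exact hs) hsh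
    have hyu := evF t₀ hx' hrep' a b u u' w2
      (by rw [hk1, add_zero]; exact hs') hsh'
    rw [← hst a] at hyu
    have htu : t = u := hyt.1.symm.trans hyu.1
    have htu' : t' = u' := hyt.2.symm.trans hyu.2
    -- the extra colors agree: both equal the right color of the tile above
    obtain ⟨s1, s1', w3, hq1, hq2, hq3, hq4, hqsh, hq⟩ :=
      kindF t₀ hx a (b + 1) hw
    obtain ⟨s2, s2', w4, hr1, hr2, hr3, hr4, hrsh, hr⟩ :=
      kindF t₀ hx' a (b + 1) (by rw [← hWeq]; exact hw)
    have hv1 := (hx (v2 a b)).2.2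
    rw [v2_add_unitv1, hs, hq] at hv1
    simp only [L, F, Sum.inr.injEq, Prod.mk.injEq] at hv1
    have hv2 := (hx' (v2 a b)).2.2
    rw [v2_add_unitv1, hs', hr] at hv2
    simp only [L, F, Sum.inr.injEq, Prod.mk.injEq] at hv2
    have hys1 := (evF t₀ hx hrep a (b + 1) s1 s1' w3
      (by rw [hk1, add_zero]; exact hq) hqsh).1
    have hys2 := (evF t₀ hx' hrep' a (b + 1) s2 s2' w4
      (by rw [hk1, add_zero]; exact hr) hrsh).1
    rw [← hst a] at hys2
    have hs12 : s1 = s2 := hys1.symm.trans hys2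
    have hww : w = w2 := by
      rw [hv1.2.2, hv2.2.2, hs12]
    rw [hs, hs', htu, htu', hww]

end Core0
end WangAux
namespace WangAux
namespace Core0
open scoped Classical
variable {V H : Type}

/-- `c` is a marker column of `y`. -/
def Mc (M : Set (TA V H)) (y : Config (TA V H) 2) (c : ℤ) : Prop :=
  y (v2 c 0) ∈ M

noncomputable def stp (M : Set (TA V H)) (y : Config (TA V H) 2) (c : ℤ) : ℤ :=
  if Mc M y (c + 1) then c + 2 else c + 1

noncomputable def bck (M : Set (TA V H)) (y : Config (TA V H) 2) (c : ℤ) : ℤ :=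
  if Mc M y (c - 1) then c - 2 else c - 1

noncomputable def str0 (M : Set (TA V H)) (y : Config (TA V H) 2) : ℤ :=
  if Mc M y 0 then -1 else 0

/-- Enumeration of the starts of the blocks of the decomposition of `y`. -/
noncomputable def fz (M : Set (TA V H)) (y : Config (TA V H) 2) (n : ℤ) : ℤ :=
  if 0 ≤ n then (stp M y)^[n.toNat] (str0 M y)
  else (bck M y)^[(-n).toNat] (str0 M y)

section
variable {M : Set (TA V H)} {y : Config (TA V H) 2}
  (hnc : ∀ c, ¬(Mc M y c ∧ Mc M y (c + 1)))

include hnc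

lemma str0_not : ¬ Mc M y (str0 M y) := by
  unfold str0
  by_cases h : Mc M y 0
  · rw [if_pos h]
    intro h'
    exact hnc (-1) ⟨h', by norm_num; exact h⟩
  · rwa [if_neg h]

lemma stp_not (c : ℤ) : ¬ Mc M y (stp M y c) := by
  unfold stp
  by_cases h : Mc M y (c + 1)
  · rw [if_pos h]
    intro h'
    exact hnc (c + 1) ⟨h, by rwa [show c + 1 + 1 = c + 2 by ring]⟩
  · rwa [if_neg h]

lemma bck_not (c : ℤ) : ¬ Mc M y (bck M y c) := by
  unfold bck
  by_cases h : Mc M y (c - 1)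
  · rw [if_pos h]
    intro h'
    exact hnc (c - 2) ⟨h', by rwa [show c - 2 + 1 = c - 1 by ring]⟩
  · rwa [if_neg h]

lemma stp_bck (c : ℤ) (h : ¬ Mc M y c) : stp M y (bck M y c) = c := by
  unfold stp bck
  by_cases h1 : Mc M y (c - 1)
  · rw [if_pos h1, if_pos (by rw [show c - 2 + 1 = c - 1 by ring]; exact h1)]
    ring
  · rw [if_neg h1, if_neg (by rw [show c - 1 + 1 = c by ring]; exact h)]
    ring

lemma fz_not (n : ℤ) : ¬ Mc M y (fz M y n) := by
  unfold fz
  split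
  · induction n.toNat with
    | zero => exact str0_not hnc
    | succ m ih => rw [Function.iterate_succ_apply']; exact stp_not hnc _
  · induction (-n).toNat with
    | zero => exact str0_not hnc
    | succ m ih => rw [Function.iterate_succ_apply']; exact bck_not hnc _

lemma fz_succ (n : ℤ) : fz M y (n + 1) = stp M y (fz M y n) := by
  rcases le_or_gt 0 n with h | h
  · unfold fz
    rw [if_pos h, if_pos (by omega), (by omega : (n + 1).toNat = n.toNat + 1),
      Function.iterate_succ_apply']
  · have h1 : fz M y n = bck M y (fz M y (n + 1)) := by
      unfold fz
      rw [if_neg (by omega), (by omega : (-n).toNat = (-(n + 1)).toNat + 1),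
        Function.iterate_succ_apply']
      congr 1
      by_cases h2 : 0 ≤ n + 1
      · have : n + 1 = 0 := by omega
        rw [if_pos h2, this]
        simp
      · rw [if_neg h2]
    rw [h1, stp_bck hnc _ (fz_not hnc (n + 1))]

lemma fz_succ' (n : ℤ) :
    fz M y (n + 1) = fz M y n + (if Mc M y (fz M y n + 1) then 2 else 1) := by
  rw [fz_succ hnc]
  unfold stp
  split <;> ring

end

/-- The encoding of a valid tiling `y` as a configuration over the new tiles. -/
noncomputable def enc (M : Set (TA V H)) (y : Config (TA V H) 2) :
    Config (TA' V H) 2 := fun n =>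
  if Mc M y (fz M y (n 0) + 1)
  then F (y (v2 (fz M y (n 0)) (n 1))) (y (v2 (fz M y (n 0) + 1) (n 1)))
    ((y (v2 (fz M y (n 0)) (n 1 + 1))).1)
  else L (y (v2 (fz M y (n 0)) (n 1)))

end Core0
end WangAux
namespace WangAux
namespace Core0
open scoped Classical
variable {V H : Type}

section
variable {T M : Set (TA V H)} {y : Config (TA V H) 2}

lemma hnc_of (hM : IsMarkers T M 0) (hy : y ∈ WangShift T) :
    ∀ c, ¬(Mc M y c ∧ Mc M y (c + 1)) := by
  intro c
  have h := (hM.2.2 y hy (v2 c 0)).1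
  rwa [v2_add_unitv0] at h

lemma hcol_of (hM : IsMarkers T M 0) (hy : y ∈ WangShift T) :
    ∀ c r, y (v2 c r) ∈ M ↔ Mc M y c := by
  have hstep : ∀ c r, (y (v2 c r) ∈ M ↔ y (v2 c (r + 1)) ∈ M) := by
    intro c r
    have h := (hM.2.2 y hy (v2 c r)).2 1 (by simp)
    rwa [v2_add_unitv1] at h
  intro c r
  induction r using Int.induction_on with
  | zero => exact Iff.rfl
  | succ i ih => rw [← hstep c i]; exact ih
  | pred i ih =>
      have h := hstep c (-i - 1)
      rw [(by ring : (-(i:ℤ) - 1) + 1 = -i)] at h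
      rw [h]; exact ih

lemma enc_mem (hM : IsMarkers T M 0) (hy : y ∈ WangShift T) :
    enc M y ∈ WangShift (S T M) := by
  have hnc := hnc_of hM hy
  have hcol := hcol_of hM hy
  intro m
  have hnotM : ∀ n r, y (v2 (fz M y n) r) ∉ M := by
    intro n r
    rw [hcol]
    exact fz_not hnc n
  have hf1 := fz_succ' hnc (m 0)
  refine ⟨?_, ?_, ?_⟩
  · -- membership in S
    show (if Mc M y (fz M y (m 0) + 1) then _ else _) ∈ S T M
    by_cases hc : Mc M y (fz M y (m 0) + 1)
    · rw [if_pos hc]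
      refine Or.inr ⟨y (v2 (fz M y (m 0)) (m 1)), y (v2 (fz M y (m 0) + 1) (m 1)),
        (y (v2 (fz M y (m 0)) (m 1 + 1))).1, (hy _).1, hnotM _ _, (hy _).1,
        (hcol _ _).mpr hc, ?_, rfl⟩
      have h := (hy (v2 (fz M y (m 0)) (m 1))).2.1
      rw [v2_add_unitv0] at h
      exact h.symm
    · rw [if_neg hc]
      exact Or.inl ⟨y (v2 (fz M y (m 0)) (m 1)), (hy _).1, hnotM _ _, rfl⟩
  · -- horizontal adjacency
    have hRHS : (enc M y (m + unitv 0)).2.2.1 =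
        (y (v2 (fz M y (m 0 + 1)) (m 1))).2.2.1 := by
      simp only [enc, add_unitv0_app0, add_unitv0_app1]
      split <;> rfl
    rw [hRHS, hf1]
    by_cases hc : Mc M y (fz M y (m 0) + 1)
    · rw [if_pos hc]
      have hL : (enc M y m).1 = (y (v2 (fz M y (m 0) + 1) (m 1))).1 := by
        simp only [enc]; rw [if_pos hc]; rfl
      rw [hL]
      have h := (hy (v2 (fz M y (m 0) + 1) (m 1))).2.1
      rw [v2_add_unitv0,
        (by ring : fz M y (m 0) + 1 + 1 = fz M y (m 0) + 2)] at h
      exact h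
    · rw [if_neg hc]
      have hL : (enc M y m).1 = (y (v2 (fz M y (m 0)) (m 1))).1 := by
        simp only [enc]; rw [if_neg hc]; rfl
      rw [hL]
      have h := (hy (v2 (fz M y (m 0)) (m 1))).2.1
      rw [v2_add_unitv0] at h
      exact h
  · -- vertical adjacency
    have hT : enc M y (m + unitv 1) =
        if Mc M y (fz M y (m 0) + 1)
        then F (y (v2 (fz M y (m 0)) (m 1 + 1)))
          (y (v2 (fz M y (m 0) + 1) (m 1 + 1)))
          ((y (v2 (fz M y (m 0)) (m 1 + 1 + 1))).1)
        else L (y (v2 (fz M y (m 0)) (m 1 + 1))) := by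
      simp only [enc, add_unitv1_app0, add_unitv1_app1]
    rw [hT]
    have hv1 := (hy (v2 (fz M y (m 0)) (m 1))).2.2
    rw [v2_add_unitv1] at hv1
    by_cases hc : Mc M y (fz M y (m 0) + 1)
    · rw [if_pos hc]
      have hL : (enc M y m).2.1 = (F (y (v2 (fz M y (m 0)) (m 1)))
          (y (v2 (fz M y (m 0) + 1) (m 1)))
          ((y (v2 (fz M y (m 0)) (m 1 + 1))).1)).2.1 := by
        simp only [enc]; rw [if_pos hc]
      rw [hL]
      have hv2 := (hy (v2 (fz M y (m 0) + 1) (m 1))).2.2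
      rw [v2_add_unitv1] at hv2
      simp only [F, Sum.inr.injEq, Prod.mk.injEq]
      exact ⟨hv1, hv2, trivial⟩
    · rw [if_neg hc]
      have hL : (enc M y m).2.1 =
          (L (y (v2 (fz M y (m 0)) (m 1)))).2.1 := by
        simp only [enc]; rw [if_neg hc]
      rw [hL]
      simp only [L, Sum.inl.injEq]
      exact hv1

lemma enc_rep (t₀ : TA V H) (hM : IsMarkers T M 0) (hy : y ∈ WangShift T) :
    OmegaRep (dec t₀) y (if Mc M y 0 then unitv 0 else 0) (enc M y) := by
  have hnc := hnc_of hM hy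
  refine ⟨fun n => v2 (fz M y (n 0)) (n 1), ?_, ?_, ?_⟩
  · show v2 (fz M y ((0 : Fin 2 → ℤ) 0)) ((0 : Fin 2 → ℤ) 1) = _
    have h0 : fz M y 0 = str0 M y := by
      unfold fz; rw [if_pos le_rfl]; rfl
    by_cases hc : Mc M y 0
    · rw [if_pos hc]
      show v2 (fz M y 0) 0 = -unitv 0
      rw [h0]
      unfold str0
      rw [if_pos hc, unitv0]
      funext j
      rcases fin2cases j with hj | hj <;> subst hj <;> simp [v2]
    · rw [if_neg hc]
      show v2 (fz M y 0) 0 = -0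
      rw [h0]
      unfold str0
      rw [if_neg hc, neg_zero, zero_eq_v2]
  · intro n j
    have hsh : (dec t₀ (enc M y n)).1 0 =
        if Mc M y (fz M y (n 0) + 1) then 2 else 1 := by
      simp only [enc]
      split
      · rw [dec_F_shape0]
      · rw [dec_L_shape0]
    rcases fin2cases j with hj | hj <;> subst hj
    · show v2 (fz M y ((n + unitv (0 : Fin 2)) 0)) ((n + unitv (0 : Fin 2)) 1) = _
      rw [hsh, smul_unitv0, v2_add, add_unitv0_app0, add_unitv0_app1,
        fz_succ' hnc]
      exact v2_congr (by split <;> push_cast <;> ring) (by ring)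
    · show v2 (fz M y ((n + unitv (1 : Fin 2)) 0)) ((n + unitv (1 : Fin 2)) 1) = _
      rw [dec_shape1, smul_unitv1, v2_add, add_unitv1_app0, add_unitv1_app1]
      exact v2_congr (by ring) (by push_cast; ring)
  · intro n
    by_cases hc : Mc M y (fz M y (n 0) + 1)
    · have hsF : enc M y n = F (y (v2 (fz M y (n 0)) (n 1)))
          (y (v2 (fz M y (n 0) + 1) (n 1)))
          ((y (v2 (fz M y (n 0)) (n 1 + 1))).1) := by
        simp only [enc]; rw [if_pos hc]
      have hshared : (y (v2 (fz M y (n 0) + 1) (n 1))).2.2.1 =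
          (y (v2 (fz M y (n 0)) (n 1))).1 := by
        have h := (hy (v2 (fz M y (n 0)) (n 1))).2.1
        rw [v2_add_unitv0] at h
        exact h.symm
      rw [hsF, dec_F _ _ _ _ hshared]
      intro a
      have ha1 : ((a 1).1 : ℤ) = 0 := by
        have h := (a 1).2
        have he : (domino (0 : Fin 2) (y (v2 (fz M y (n 0)) (n 1)))
            (y (v2 (fz M y (n 0) + 1) (n 1)))).1 1 = 1 := by simp [domino]
        omega
      have hb : (a 0).1 < 2 := by
        have h := (a 0).2
        simpa [domino] using h
      have hm : (fun j => v2 (fz M y (n 0)) (n 1) j + ((a j).1 : ℤ)) =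
          v2 (fz M y (n 0) + (a 0).1) (n 1) := by
        funext j
        rcases fin2cases j with hj | hj <;> subst hj
        · simp
        · rw [v2_app1, v2_app1, ha1, add_zero]
      rw [hm]
      rcases (by omega : (a 0).1 = 0 ∨ (a 0).1 = 1) with h0 | h0 <;> rw [h0]
      · simp only [domino]
        rw [if_pos h0]
        norm_num
      · simp only [domino]
        rw [if_neg (by omega)]
        norm_num
    · have hsL : enc M y n = L (y (v2 (fz M y (n 0)) (n 1))) := by
        simp only [enc]; rw [if_neg hc]
      rw [hsL, dec_L]
      intro a
      have ha : ∀ j, ((a j).1 : ℤ) = 0 := by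
        intro j
        have := (a j).2
        simp only [letter] at this
        omega
      have hm : (fun j => v2 (fz M y (n 0)) (n 1) j + ((a j).1 : ℤ)) =
          v2 (fz M y (n 0)) (n 1) := by
        funext j
        rw [ha j, add_zero]
      rw [hm]
      rfl

end
end Core0
end WangAux
namespace WangAux

theorem core_main {V H : Type} (T M : Set (V × H × V × H))
    (hM : IsMarkers T M 0) :
    ∃ (V' H' : Type) (S' : Set (V' × H' × V' × H'))
      (ω₀ : (V' × H' × V' × H') → FWord (V × H × V × H) 2),
      (∀ s ∈ S', (∃ t, t ∈ T ∧ t ∉ M ∧ ω₀ s = letter 2 t) ∨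
        (∃ t t', t ∈ T ∧ t ∉ M ∧ t' ∈ M ∧ ω₀ s = domino 0 t t')) ∧
      (∀ x ∈ WangShift S', ∃ y ∈ WangShift T, OmegaRep ω₀ y 0 x) ∧
      Recognizable ω₀ (WangShift S') ∧
      (∀ y, y ∈ WangShift T ↔ ∃ x ∈ WangShift S',
        OmegaRep ω₀ y 0 x ∨ OmegaRep ω₀ y (unitv 0) x) := by
  classical
  obtain ⟨t₀, -⟩ := hM.1
  refine ⟨V, H ⊕ H × H × V, Core0.S T M, Core0.dec t₀, ?_, ?_,
    Core0.recog t₀ T M, ?_⟩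
  · rintro s (⟨t, h1, h2, rfl⟩ | ⟨t, t', w, h1, h2, h3, h4, hsh, rfl⟩)
    · exact Or.inl ⟨t, h1, h2, Core0.dec_L t₀ t⟩
    · exact Or.inr ⟨t, t', h1, h2, h4, Core0.dec_F t₀ t t' w hsh⟩
  · intro x hx
    exact Core0.part2 t₀ hx
  · intro y
    constructor
    · intro hy
      refine ⟨Core0.enc M y, Core0.enc_mem hM hy, ?_⟩
      by_cases hc : Core0.Mc M y 0
      · right
        have h := Core0.enc_rep t₀ hM hy
        rwa [if_pos hc] at h
      · left
        have h := Core0.enc_rep t₀ hM hy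
        rwa [if_neg hc] at h
    · rintro ⟨x, hx, hrep | hrep⟩
      · exact Core0.rep_valid t₀ hx hrep
      · exact Core0.rep_valid t₀ hx hrep

end WangAux
namespace WangAux

def swi : Fin 2 → Fin 2 := fun j => if j = 0 then 1 else 0

lemma swi_swi (j : Fin 2) : swi (swi j) = j := by
  rcases fin2cases j with h | h <;> subst h <;> rfl

lemma swi0 : swi 0 = 1 := rfl
lemma swi1 : swi 1 = 0 := rfl

def sw2 {α : Type*} (m : Fin 2 → α) : Fin 2 → α := fun j => m (swi j)

lemma sw2_sw2 {α : Type*} (m : Fin 2 → α) : sw2 (sw2 m) = m := by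
  funext j
  show m (swi (swi j)) = m j
  rw [swi_swi]

lemma sw2_add (m k : Fin 2 → ℤ) : sw2 (m + k) = sw2 m + sw2 k := rfl

lemma sw2_zero : sw2 (0 : Fin 2 → ℤ) = 0 := rfl

lemma sw2_neg (m : Fin 2 → ℤ) : sw2 (-m) = -(sw2 m) := rfl

lemma sw2_smul (c : ℤ) (m : Fin 2 → ℤ) : sw2 (c • m) = c • sw2 m := rfl

lemma sw2_unitv (j : Fin 2) : sw2 (unitv j) = unitv (swi j) := by
  funext j'
  show unitv j (swi j') = unitv (swi j) j'
  rcases fin2cases j with h | h <;> subst h <;>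
    rcases fin2cases j' with h' | h' <;> subst h' <;> rfl

lemma sw2_inj {α : Type*} {m m' : Fin 2 → α} (h : sw2 m = sw2 m') : m = m' := by
  rw [← sw2_sw2 m, ← sw2_sw2 m', h]

/-- Transposition of a Wang tile. -/
def tsw {α β : Type} (t : α × β × α × β) : β × α × β × α :=
  (t.2.1, t.1, t.2.2.2, t.2.2.1)

lemma tsw_tsw {α β : Type} (t : α × β × α × β) : tsw (tsw t) = t := rfl

lemma tsw_inj {α β : Type} {t t' : α × β × α × β} (h : tsw t = tsw t') :
    t = t' := by
  rw [← tsw_tsw t, ← tsw_tsw t', h]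

lemma tsw_mem {α β : Type} {T : Set (α × β × α × β)} {t : α × β × α × β} :
    tsw t ∈ tsw '' T ↔ t ∈ T := by
  constructor
  · rintro ⟨u, hu, he⟩
    rwa [← tsw_inj he]
  · intro h
    exact ⟨t, h, rfl⟩

lemma tsw_image_image {α β : Type} (T : Set (α × β × α × β)) :
    tsw '' (tsw '' T) = T := by
  rw [Set.image_image]
  simp only [tsw_tsw]
  exact Set.image_id T

/-- Transposition of a configuration of Wang tiles. -/
def cfsw {α β : Type} (y : Config (α × β × α × β) 2) :
    Config (β × α × β × α) 2 := fun m => tsw (y (sw2 m))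

lemma cfsw_cfsw {α β : Type} (y : Config (α × β × α × β) 2) :
    cfsw (cfsw y) = y := by
  funext m
  show tsw (tsw (y (sw2 (sw2 m)))) = y m
  rw [sw2_sw2]
  rfl

lemma cfsw_inj {α β : Type} {y y' : Config (α × β × α × β) 2}
    (h : cfsw y = cfsw y') : y = y' := by
  rw [← cfsw_cfsw y, ← cfsw_cfsw y', h]

lemma wang_sw_mp {α β : Type} {T : Set (α × β × α × β)}
    {y : Config (α × β × α × β) 2} (hy : y ∈ WangShift T) :
    cfsw y ∈ WangShift (tsw '' T) := by
  intro m
  obtain ⟨h1, h2, h3⟩ := hy (sw2 m)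
  refine ⟨tsw_mem.mpr h1, ?_, ?_⟩
  · show (y (sw2 m)).2.1 = (tsw (y (sw2 (m + unitv 0)))).2.2.1
    rw [sw2_add, sw2_unitv, swi0]
    exact h3
  · show (y (sw2 m)).1 = (tsw (y (sw2 (m + unitv 1)))).2.2.2
    rw [sw2_add, sw2_unitv, swi1]
    exact h2

lemma wang_sw {α β : Type} {T : Set (α × β × α × β)}
    {y : Config (α × β × α × β) 2} :
    y ∈ WangShift T ↔ cfsw y ∈ WangShift (tsw '' T) := by
  constructor
  · exact wang_sw_mp
  · intro h
    have h2 := wang_sw_mp h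
    rwa [cfsw_cfsw, tsw_image_image] at h2

end WangAux
namespace WangAux

lemma fword_ext {A : Type} {u v : FWord A 2} (h1 : ∀ j, u.1 j = v.1 j)
    (h2 : ∀ (a : ∀ j, Fin (u.1 j)) (b : ∀ j, Fin (v.1 j)),
      (∀ j, ((a j) : ℕ) = ((b j) : ℕ)) → u.2 a = v.2 b) : u = v := by
  obtain ⟨n, f⟩ := u
  obtain ⟨n', f'⟩ := v
  have hn : n = n' := funext h1
  subst hn
  have hf : f = f' := by
    funext a
    exact h2 a a (fun j => rfl)
  rw [hf]

lemma val_congr {n : Fin 2 → ℕ} (a : ∀ j, Fin (n j)) {j j' : Fin 2}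
    (h : j = j') : ((a j) : ℕ) = ((a j') : ℕ) := by subst h; rfl

/-- Transposition of a 2-dimensional word, applying `g` to the letters. -/
def wsw {A B : Type} (g : A → B) (u : FWord A 2) : FWord B 2 :=
  ⟨fun j => u.1 (swi j),
   fun a => g (u.2 (fun j => Fin.cast (congrArg u.1 (swi_swi j)) (a (swi j))))⟩

lemma wsw_letter {A B : Type} (g : A → B) (t : A) :
    wsw g (letter 2 t) = letter 2 (g t) := rfl

lemma wsw_domino0 {A B : Type} (g : A → B) (b c : A) :
    wsw g (domino (0 : Fin 2) b c) = domino (1 : Fin 2) (g b) (g c) := by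
  refine fword_ext (fun j => ?_) (fun a a' hv => ?_)
  · rcases fin2cases j with h | h <;> subst h <;> rfl
  · show g (if ((Fin.cast (congrArg (domino (0:Fin 2) b c).1 (swi_swi 0))
      (a (swi 0))) : ℕ) = 0 then b else c) = _
    have hval : ((a (swi 0)) : ℕ) = ((a' 1) : ℕ) := hv 1
    show g (if ((a (swi 0)) : ℕ) = 0 then b else c) =
      if ((a' 1) : ℕ) = 0 then g b else g c
    rw [hval]
    split <;> rfl

lemma wsw_invol {α β : Type} (u : FWord (α × β × α × β) 2) :
    wsw (tsw : β × α × β × α → α × β × α × β) (wsw tsw u) = u := by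
  refine fword_ext (fun j => ?_) (fun a a' hv => ?_)
  · show u.1 (swi (swi j)) = u.1 j
    rw [swi_swi]
  · show tsw (tsw (u.2 _)) = u.2 a'
    rw [tsw_tsw]
    refine congrArg u.2 (funext fun j => Fin.ext ?_)
    show ((a (swi (swi j))) : ℕ) = ((a' j) : ℕ)
    rw [val_congr a (swi_swi j)]
    exact hv j

lemma rep_transport {P Q U W : Type} (q : P → Q) (g : W → U)
    (ω₂ : Q → FWord W 2) (y₂ : Config W 2) (k₂ : Fin 2 → ℤ) (x : Config P 2)
    (h : OmegaRep ω₂ y₂ k₂ (fun m => q (x (sw2 m)))) :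
    OmegaRep (fun s => wsw g (ω₂ (q s))) (fun m => g (y₂ (sw2 m))) (sw2 k₂) x := by
  obtain ⟨p₂, h0, hinc, hval⟩ := h
  have hval' : ∀ (n : Fin 2 → ℤ) (a : ∀ j, Fin ((ω₂ (q (x n))).1 j)),
      y₂ (fun j => p₂ (sw2 n) j + ((a j).1 : ℤ)) = (ω₂ (q (x n))).2 a := by
    intro n
    have h : ∀ a : (∀ j, Fin ((ω₂ (q (x (sw2 (sw2 n))))).1 j)),
        y₂ (fun j => p₂ (sw2 n) j + ((a j).1 : ℤ)) =
          (ω₂ (q (x (sw2 (sw2 n))))).2 a := hval (sw2 n)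
    rw [sw2_sw2 n] at h
    exact h
  refine ⟨fun n => sw2 (p₂ (sw2 n)), ?_, ?_, ?_⟩
  · show sw2 (p₂ (sw2 0)) = -(sw2 k₂)
    rw [sw2_zero, h0, sw2_neg]
  · intro n j
    show sw2 (p₂ (sw2 (n + unitv j))) = sw2 (p₂ (sw2 n)) + _
    have h1 := hinc (sw2 n) (swi j)
    rw [sw2_add, sw2_unitv, h1]
    rw [sw2_add, sw2_smul, sw2_unitv, swi_swi]
    have h2 : (ω₂ (q (x (sw2 (sw2 n))))).1 (swi j) =
        (ω₂ (q (x n))).1 (swi j) := by rw [sw2_sw2]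
    rw [h2]
    rfl
  · intro n a
    have h2 := hval' n
      (fun j => Fin.cast (congrArg (ω₂ (q (x n))).1 (swi_swi j)) (a (swi j)))
    show g (y₂ (sw2 (fun j => sw2 (p₂ (sw2 n)) j + ((a j).1 : ℤ)))) = _
    have harg : (sw2 (fun j => sw2 (p₂ (sw2 n)) j + ((a j).1 : ℤ))) =
        (fun j => p₂ (sw2 n) j +
          (((Fin.cast (congrArg (ω₂ (q (x n))).1 (swi_swi j)) (a (swi j))) : ℕ) : ℤ)) := by
      funext j
      show p₂ (sw2 n) (swi (swi j)) + ((a (swi j)).1 : ℤ) = _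
      rw [show p₂ (sw2 n) (swi (swi j)) = p₂ (sw2 n) j from by rw [swi_swi]]
      rfl
    rw [harg, h2]
    rfl

lemma cent_transport {P Q W : Type} (q : P → Q) {U : Type} (g : W → U)
    (ω₂ : Q → FWord W 2) (k : Fin 2 → ℤ) (x : Config P 2)
    (h : Centered (fun s => wsw g (ω₂ (q s))) k x) :
    Centered ω₂ (sw2 k) (fun m => q (x (sw2 m))) := by
  intro j
  have h1 := h (swi j)
  refine ⟨h1.1, ?_⟩
  have h2 : (sw2 k) j < (((ω₂ (q (x 0))).1 (swi (swi j)) : ℕ) : ℤ) := h1.2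
  have h3 : ((ω₂ (q (x 0))).1 (swi (swi j))) = ((ω₂ (q (x 0))).1 j) := by
    rw [swi_swi]
  rw [h3] at h2
  exact h2

lemma mem_tsw_image {α β : Type} {M : Set (α × β × α × β)} {s : β × α × β × α} :
    s ∈ tsw '' M ↔ tsw s ∈ M := by
  constructor
  · rintro ⟨u, hu, rfl⟩
    rwa [tsw_tsw]
  · intro h
    exact ⟨tsw s, h, rfl⟩

lemma markers_sw {V H : Type} {T M : Set (V × H × V × H)}
    (hM : IsMarkers T M 1) : IsMarkers (tsw '' T) (tsw '' M) 0 := by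
  obtain ⟨hne, hsub, hcond⟩ := hM
  refine ⟨hne.image _, ?_, ?_⟩
  · constructor
    · exact Set.image_mono hsub.1
    · intro hcon
      apply hsub.2
      intro t ht
      have h1 : tsw t ∈ tsw '' M := hcon ⟨t, ht, rfl⟩
      exact tsw_mem.mp h1
  · intro x hx m
    have hy : cfsw x ∈ WangShift T := by
      rw [wang_sw]
      rwa [cfsw_cfsw]
    have hc := hcond (cfsw x) hy (sw2 m)
    have hmem : ∀ m', x m' ∈ tsw '' M ↔ cfsw x (sw2 m') ∈ M := by
      intro m'
      show x m' ∈ tsw '' M ↔ tsw (x (sw2 (sw2 m'))) ∈ M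
      rw [sw2_sw2]
      exact mem_tsw_image
    constructor
    · intro hcon
      refine hc.1 ⟨(hmem m).mp hcon.1, ?_⟩
      have h2 := (hmem (m + unitv 0)).mp hcon.2
      rwa [sw2_add, sw2_unitv, swi0] at h2
    · intro j hj
      have hj1 : j = 1 := by
        rcases fin2cases j with h | h
        · exact absurd h hj
        · exact h
      subst hj1
      have h2 := hc.2 0 (by decide)
      rw [hmem m, hmem (m + unitv 1), sw2_add, sw2_unitv, swi1]
      exact h2

end WangAux
namespace WangAux

lemma cfsw_unfold {α β : Type} (x : Config (α × β × α × β) 2) :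
    (fun m => tsw ((cfsw x) (sw2 m))) = x := by
  funext m
  show tsw (tsw (x (sw2 (sw2 m)))) = x m
  rw [sw2_sw2]
  rfl

lemma sw2_unitv0 : sw2 (unitv (0 : Fin 2)) = unitv 1 := by
  rw [sw2_unitv, swi0]

lemma sw2_unitv1 : sw2 (unitv (1 : Fin 2)) = unitv 0 := by
  rw [sw2_unitv, swi1]

theorem core_main1 {V H : Type} (T M : Set (V × H × V × H))
    (hM : IsMarkers T M 1) :
    ∃ (V' H' : Type) (S' : Set (V' × H' × V' × H'))
      (ω₀ : (V' × H' × V' × H') → FWord (V × H × V × H) 2),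
      (∀ s ∈ S', (∃ t, t ∈ T ∧ t ∉ M ∧ ω₀ s = letter 2 t) ∨
        (∃ t t', t ∈ T ∧ t ∉ M ∧ t' ∈ M ∧ ω₀ s = domino 1 t t')) ∧
      (∀ x ∈ WangShift S', ∃ y ∈ WangShift T, OmegaRep ω₀ y 0 x) ∧
      Recognizable ω₀ (WangShift S') ∧
      (∀ y, y ∈ WangShift T ↔ ∃ x ∈ WangShift S',
        OmegaRep ω₀ y 0 x ∨ OmegaRep ω₀ y (unitv 1) x) := by
  obtain ⟨V₂, H₂, S₂, ω₂, hp1, hp2, hp3, hp4⟩ :=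
    core_main (tsw '' T) (tsw '' M) (markers_sw hM)
  refine ⟨H₂, V₂, tsw '' S₂, fun s => wsw tsw (ω₂ (tsw s)), ?_, ?_, ?_, ?_⟩
  · -- letters and dominoes
    rintro s ⟨u, hu, rfl⟩
    rcases hp1 u hu with ⟨t, hT, hM', he⟩ | ⟨t, t', hT, hM', hM2, he⟩
    · refine Or.inl ⟨tsw t, mem_tsw_image.mp hT,
        fun hc => hM' (mem_tsw_image.mpr hc), ?_⟩
      show wsw tsw (ω₂ (tsw (tsw u))) = _
      rw [tsw_tsw u, he, wsw_letter]
    · refine Or.inr ⟨tsw t, tsw t', mem_tsw_image.mp hT,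
        fun hc => hM' (mem_tsw_image.mpr hc), mem_tsw_image.mp hM2, ?_⟩
      show wsw tsw (ω₂ (tsw (tsw u))) = _
      rw [tsw_tsw u, he, wsw_domino0]
  · -- images of valid tilings
    intro x hx
    have hx2 := wang_sw_mp hx
    rw [tsw_image_image] at hx2
    obtain ⟨y₂, hy₂, hrep₂⟩ := hp2 (cfsw x) hx2
    refine ⟨cfsw y₂, ?_, ?_⟩
    · rw [wang_sw, cfsw_cfsw]
      exact hy₂
    · exact rep_transport tsw tsw ω₂ y₂ 0 x hrep₂
  · -- recognizability
    intro y k k' x x' hx hx' hrep hcent hrep' hcent'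
    have hfun : (fun s => wsw tsw
        ((fun s' => wsw tsw (ω₂ (tsw s'))) (tsw s))) = ω₂ :=
      funext fun s => wsw_invol (ω₂ s)
    have hx2 := wang_sw_mp hx
    rw [tsw_image_image] at hx2
    have hx2' := wang_sw_mp hx'
    rw [tsw_image_image] at hx2'
    rw [← cfsw_unfold x] at hrep
    rw [← cfsw_unfold x'] at hrep'
    have h1 := rep_transport tsw tsw (fun s' => wsw tsw (ω₂ (tsw s'))) y k
      (cfsw x) hrep
    have h1' := rep_transport tsw tsw (fun s' => wsw tsw (ω₂ (tsw s'))) y k'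
      (cfsw x') hrep'
    rw [hfun] at h1 h1'
    have hc1 := cent_transport tsw tsw ω₂ k x hcent
    have hc1' := cent_transport tsw tsw ω₂ k' x' hcent'
    obtain ⟨hk, hxx⟩ := hp3 (cfsw y) (sw2 k) (sw2 k') (cfsw x) (cfsw x')
      hx2 hx2' h1 hc1 h1' hc1'
    exact ⟨sw2_inj hk, cfsw_inj hxx⟩
  · -- surjectivity up to a shift
    intro y
    constructor
    · intro hy
      have hy2 : cfsw y ∈ WangShift (tsw '' T) := wang_sw_mp hy
      obtain ⟨x₂, hx₂, hrep₂⟩ := (hp4 (cfsw y)).mp hy2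
      refine ⟨cfsw x₂, wang_sw_mp hx₂, ?_⟩
      rcases hrep₂ with h | h
      · left
        rw [← cfsw_unfold x₂] at h
        have h1 := rep_transport tsw tsw ω₂ (cfsw y) 0 (cfsw x₂) h
        rw [cfsw_unfold y] at h1
        exact h1
      · right
        rw [← cfsw_unfold x₂] at h
        have h1 := rep_transport tsw tsw ω₂ (cfsw y) (unitv 0) (cfsw x₂) h
        rw [cfsw_unfold y, sw2_unitv0] at h1
        exact h1
    · rintro ⟨x, hx, hrep⟩
      have hfun : (fun s => wsw tsw
          ((fun s' => wsw tsw (ω₂ (tsw s'))) (tsw s))) = ω₂ :=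
        funext fun s => wsw_invol (ω₂ s)
      have hx2 := wang_sw_mp hx
      rw [tsw_image_image] at hx2
      rw [wang_sw]
      refine (hp4 (cfsw y)).mpr ⟨cfsw x, hx2, ?_⟩
      rcases hrep with h | h
      · left
        rw [← cfsw_unfold x] at h
        have h1 := rep_transport tsw tsw (fun s' => wsw tsw (ω₂ (tsw s'))) y 0
          (cfsw x) h
        rw [hfun] at h1
        exact h1
      · right
        rw [← cfsw_unfold x] at h
        have h1 := rep_transport tsw tsw (fun s' => wsw tsw (ω₂ (tsw s')))
          y (unitv 1) (cfsw x) h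
        rw [hfun, sw2_unitv1] at h1
        exact h1

end WangAux


/-- If a Wang tile set `T` has a set of markers `M` in direction `e i`, then
there is a Wang tile set `S` and a `2`-dimensional morphism
`ω : Ω_S → Ω_T` sending each tile of `S` to a tile of `T ∖ M` or to a domino
`(T ∖ M) ⊙^i M`, which is recognizable in `Ω_S` and onto up to a shift:
`ω(Ω_S) ∪ σ^{e i} ω(Ω_S) = Ω_T`. -/
theorem exists_recognizable_morphism_of_markers {V H : Type}
    (T M : Set (V × H × V × H)) (i : Fin 2) (hM : IsMarkers T M i) :
    ∃ (V' H' : Type) (S : Set (V' × H' × V' × H'))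
      (ω₀ : (V' × H' × V' × H') → FWord (V × H × V × H) 2),
      (∀ s ∈ S, (∃ t, t ∈ T ∧ t ∉ M ∧ ω₀ s = letter 2 t) ∨
        (∃ t t', t ∈ T ∧ t ∉ M ∧ t' ∈ M ∧ ω₀ s = domino i t t')) ∧
      (∀ x ∈ WangShift S, ∃ y ∈ WangShift T, OmegaRep ω₀ y 0 x) ∧
      Recognizable ω₀ (WangShift S) ∧
      (∀ y, y ∈ WangShift T ↔ ∃ x ∈ WangShift S,
        OmegaRep ω₀ y 0 x ∨ OmegaRep ω₀ y (unitv i) x) := by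
  fin_cases i
  · exact WangAux.core_main T M hM
  · exact WangAux.core_main1 T M hM
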